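/- The Minkowski question mark function is the unique bounded function f : [0,1] → ℝ with f(0)=0, f(1)=1 satisfying f(x) = (1/2) f(x/(1-x)) for 0 ≤ x ≤ 1/2 and f(x) = 1 − (1/2) f((1-x)/x) for 1/2 < x ≤ 1. -/

import Mathlib

open Filter Set Topology

/-- The self-similarity operator for Minkowski's question mark function. -/
noncomputable def minkT (f : ℝ → ℝ) : ℝ → ℝ := fun x =>
  if x ≤ 1/2 then (1/2) * f (x / (1 - x)) else 1 - (1/2) * f ((1 - x) / x)

/-- Minkowski's question mark function, obtained as the (uniform) limit of the
iteration of `minkT` starting from the identity distribution function. -/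
noncomputable def minkQ : ℝ → ℝ := fun x =>
  limUnder Filter.atTop (fun n => (minkT^[n] id) x)

lemma mink_mem1 {x : ℝ} (hx : x ∈ Icc (0:ℝ) 1) (h : x ≤ 1/2) :
    x / (1 - x) ∈ Icc (0:ℝ) 1 := by
  constructor
  · exact div_nonneg hx.1 (by linarith)
  · rw [div_le_one (by linarith)]; linarith

lemma mink_mem2 {x : ℝ} (hx : x ∈ Icc (0:ℝ) 1) (h : ¬ x ≤ 1/2) :
    (1 - x) / x ∈ Icc (0:ℝ) 1 := by
  push_neg at h
  constructor
  · exact div_nonneg (by linarith [hx.2]) (by linarith)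
  · rw [div_le_one (by linarith)]; linarith

lemma mink_contract {f g : ℝ → ℝ} {C : ℝ}
    (h : ∀ y ∈ Icc (0:ℝ) 1, |f y - g y| ≤ C) :
    ∀ x ∈ Icc (0:ℝ) 1, |minkT f x - minkT g x| ≤ C / 2 := by
  intro x hx
  unfold minkT
  by_cases hle : x ≤ 1/2
  · simp only [if_pos hle]
    have h' := h _ (mink_mem1 hx hle)
    have e : (1/2:ℝ) * f (x/(1-x)) - (1/2) * g (x/(1-x))
        = (f (x/(1-x)) - g (x/(1-x))) / 2 := by ring
    rw [e, abs_div]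
    rw [abs_of_pos (by norm_num : (0:ℝ) < 2)]
    linarith
  · simp only [if_neg hle]
    have h' := h _ (mink_mem2 hx hle)
    rw [abs_sub_comm] at h'
    have e : (1 - (1/2:ℝ) * f ((1-x)/x)) - (1 - (1/2) * g ((1-x)/x))
        = (g ((1-x)/x) - f ((1-x)/x)) / 2 := by ring
    rw [e, abs_div, abs_of_pos (by norm_num : (0:ℝ) < 2)]
    linarith

lemma mink_preserve {f : ℝ → ℝ} (hf : ∀ y ∈ Icc (0:ℝ) 1, f y ∈ Icc (0:ℝ) 1) :
    ∀ x ∈ Icc (0:ℝ) 1, minkT f x ∈ Icc (0:ℝ) 1 := by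
  intro x hx
  unfold minkT
  by_cases hle : x ≤ 1/2
  · simp only [if_pos hle]
    obtain ⟨h1, h2⟩ := hf _ (mink_mem1 hx hle)
    constructor <;> [linarith; linarith]
  · simp only [if_neg hle]
    obtain ⟨h1, h2⟩ := hf _ (mink_mem2 hx hle)
    constructor <;> [linarith; linarith]

lemma mink_iter_mem : ∀ (n : ℕ), ∀ x ∈ Icc (0:ℝ) 1, (minkT^[n] id) x ∈ Icc (0:ℝ) 1 := by
  intro n
  induction n with
  | zero => intro x hx; simpa using hx
  | succ n ih =>
      intro x hx
      rw [Function.iterate_succ_apply']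
      exact mink_preserve ih x hx

lemma mink_diff_bound : ∀ (n : ℕ), ∀ x ∈ Icc (0:ℝ) 1,
    |(minkT^[n+1] id) x - (minkT^[n] id) x| ≤ 2 * (1/2)^n := by
  intro n
  induction n with
  | zero =>
      intro x hx
      obtain ⟨h1, h2⟩ := mink_iter_mem 1 x hx
      simp only [Function.iterate_one] at h1 h2
      simp only [zero_add, Function.iterate_one, Function.iterate_zero, id_eq, pow_zero,
        mul_one]
      rw [abs_le]
      constructor <;> [linarith [hx.2]; linarith [hx.1]]
  | succ n ih =>
      intro x hx
      have h1 : (minkT^[n+1+1] id) x = minkT (minkT^[n+1] id) x :=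
        congrFun (Function.iterate_succ_apply' minkT (n+1) id) x
      have h2 : (minkT^[n+1] id) x = minkT (minkT^[n] id) x :=
        congrFun (Function.iterate_succ_apply' minkT n id) x
      calc |(minkT^[n+1+1] id) x - (minkT^[n+1] id) x|
          = |minkT (minkT^[n+1] id) x - minkT (minkT^[n] id) x| := by rw [h1, h2]
        _ ≤ (2 * (1/2)^n) / 2 := mink_contract ih x hx
        _ = 2 * (1/2)^(n+1) := by ring

lemma mink_tendsto : ∀ x ∈ Icc (0:ℝ) 1,
    Tendsto (fun n => (minkT^[n] id) x) atTop (𝓝 (minkQ x)) := by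
  intro x hx
  have hc : CauchySeq (fun n => (minkT^[n] id) x) := by
    apply cauchySeq_of_le_geometric (1/2) 2 (by norm_num)
    intro n
    rw [Real.dist_eq, abs_sub_comm]
    exact mink_diff_bound n x hx
  obtain ⟨L, hL⟩ := cauchySeq_tendsto_of_complete hc
  have : minkQ x = L := hL.limUnder_eq
  rwa [this]

lemma minkQ_mem : ∀ x ∈ Icc (0:ℝ) 1, minkQ x ∈ Icc (0:ℝ) 1 := by
  intro x hx
  exact isClosed_Icc.mem_of_tendsto (mink_tendsto x hx)
    (Filter.Eventually.of_forall fun n => mink_iter_mem n x hx)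

lemma minkQ_fixed : ∀ x ∈ Icc (0:ℝ) 1, minkQ x = minkT minkQ x := by
  intro x hx
  have h1 : Tendsto (fun n => (minkT^[n+1] id) x) atTop (𝓝 (minkQ x)) :=
    (mink_tendsto x hx).comp (tendsto_add_atTop_nat 1)
  by_cases hle : x ≤ 1/2
  · have hy := mink_mem1 hx hle
    have h2 : Tendsto (fun n => (1/2) * (minkT^[n] id) (x/(1-x))) atTop
        (𝓝 ((1/2) * minkQ (x/(1-x)))) := (mink_tendsto _ hy).const_mul _
    have h1' : Tendsto (fun n => (1/2) * (minkT^[n] id) (x/(1-x))) atTop (𝓝 (minkQ x)) := by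
      apply h1.congr
      intro n
      rw [Function.iterate_succ_apply']
      show minkT (minkT^[n] id) x = _
      unfold minkT
      rw [if_pos hle]
    have := tendsto_nhds_unique h1' h2
    unfold minkT
    rw [if_pos hle]
    exact this
  · have hy := mink_mem2 hx hle
    have h2 : Tendsto (fun n => 1 - (1/2) * (minkT^[n] id) ((1-x)/x)) atTop
        (𝓝 (1 - (1/2) * minkQ ((1-x)/x))) :=
      tendsto_const_nhds.sub ((mink_tendsto _ hy).const_mul _)
    have h1' : Tendsto (fun n => 1 - (1/2) * (minkT^[n] id) ((1-x)/x)) atTop (𝓝 (minkQ x)) := by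
      apply h1.congr
      intro n
      rw [Function.iterate_succ_apply']
      show minkT (minkT^[n] id) x = _
      unfold minkT
      rw [if_neg hle]
    have := tendsto_nhds_unique h1' h2
    unfold minkT
    rw [if_neg hle]
    exact this

lemma mink_iter_zero : ∀ n : ℕ, (minkT^[n] id) (0:ℝ) = 0 := by
  intro n
  induction n with
  | zero => simp
  | succ n ih =>
      rw [Function.iterate_succ_apply']
      simp [minkT, ih]

lemma mink_iter_one : ∀ n : ℕ, (minkT^[n] id) (1:ℝ) = 1 := by
  intro n
  induction n with
  | zero => simp
  | succ n ih =>
      rw [Function.iterate_succ_apply']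
      norm_num [minkT, mink_iter_zero n]

theorem minkQ_unique_fixed_point :
    ((∃ M : ℝ, ∀ x ∈ Set.Icc (0:ℝ) 1, |minkQ x| ≤ M) ∧
      minkQ 0 = 0 ∧ minkQ 1 = 1 ∧
      (∀ x ∈ Set.Icc (0:ℝ) (1/2), minkQ x = (1/2) * minkQ (x / (1 - x))) ∧
      (∀ x ∈ Set.Ioc (1/2 : ℝ) 1, minkQ x = 1 - (1/2) * minkQ ((1 - x) / x))) ∧
    (∀ f : ℝ → ℝ,
      (∃ M : ℝ, ∀ x ∈ Set.Icc (0:ℝ) 1, |f x| ≤ M) →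
      f 0 = 0 → f 1 = 1 →
      (∀ x ∈ Set.Icc (0:ℝ) (1/2), f x = (1/2) * f (x / (1 - x))) →
      (∀ x ∈ Set.Ioc (1/2 : ℝ) 1, f x = 1 - (1/2) * f ((1 - x) / x)) →
      ∀ x ∈ Set.Icc (0:ℝ) 1, f x = minkQ x) := by
  constructor
  · refine ⟨⟨1, fun x hx => ?_⟩, ?_, ?_, ?_, ?_⟩
    · obtain ⟨h1, h2⟩ := minkQ_mem x hx
      rw [abs_le]; exact ⟨by linarith, h2⟩
    · have : Tendsto (fun n => (minkT^[n] id) (0:ℝ)) atTop (𝓝 0) := by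
        simp only [mink_iter_zero]; exact tendsto_const_nhds
      exact this.limUnder_eq
    · have : Tendsto (fun n => (minkT^[n] id) (1:ℝ)) atTop (𝓝 1) := by
        simp only [mink_iter_one]; exact tendsto_const_nhds
      exact this.limUnder_eq
    · intro x hx
      have hx1 : x ∈ Icc (0:ℝ) 1 := ⟨hx.1, by linarith [hx.2]⟩
      have := minkQ_fixed x hx1
      rw [this]
      unfold minkT
      rw [if_pos hx.2]
    · intro x hx
      have hx1 : x ∈ Icc (0:ℝ) 1 := ⟨by linarith [hx.1], hx.2⟩
      have := minkQ_fixed x hx1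
      rw [this]
      unfold minkT
      rw [if_neg (not_le.mpr hx.1)]
  · rintro f ⟨M, hM⟩ hf0 hf1 hfa hfb x hx
    have hfT : ∀ x ∈ Icc (0:ℝ) 1, f x = minkT f x := by
      intro x hx
      by_cases hle : x ≤ 1/2
      · unfold minkT; rw [if_pos hle]
        exact hfa x ⟨hx.1, hle⟩
      · unfold minkT; rw [if_neg hle]
        exact hfb x ⟨not_le.mp hle, hx.2⟩
    have key : ∀ n : ℕ, ∀ x ∈ Icc (0:ℝ) 1, |f x - minkQ x| ≤ (M+1) * (1/2)^n := by
      intro n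
      induction n with
      | zero =>
          intro x hx
          have h1 := hM x hx
          obtain ⟨h2, h3⟩ := minkQ_mem x hx
          rw [abs_le] at h1 ⊢
          constructor <;> [linarith; linarith]
      | succ n ih =>
          intro x hx
          calc |f x - minkQ x|
              = |minkT f x - minkT minkQ x| := by rw [← hfT x hx, ← minkQ_fixed x hx]
            _ ≤ ((M+1) * (1/2)^n) / 2 := mink_contract ih x hx
            _ = (M+1) * (1/2)^(n+1) := by ring
    have hlim : Tendsto (fun n : ℕ => (M+1) * (1/2:ℝ)^n) atTop (𝓝 0) := by
      have := tendsto_pow_atTop_nhds_zero_of_lt_one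
        (by norm_num : (0:ℝ) ≤ 1/2) (by norm_num : (1/2:ℝ) < 1)
      simpa using this.const_mul (M+1)
    have h0 : |f x - minkQ x| ≤ 0 := ge_of_tendsto' hlim (fun n => key n x hx)
    have : |f x - minkQ x| = 0 := le_antisymm h0 (abs_nonneg _)
    have := abs_eq_zero.mp this
    linarith [this]
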